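/- Let $J, I$ be disjoint finite sets of simple roots in a root system $\Phi$ with $\Delta = I \sqcup J$, and fix $\lambda = \sum_{\alpha \in \Phi_I^+} n_\alpha \alpha$ with $n_\alpha \in \mathbb{N}$. Then there are only finitely many $\mu \in \mathbb{N}\text{-span}(\Phi_J^+)$ such that $\lambda + \mu$ is expressible as a nonnegative integral combination of elements of $\Phi^+ \setminus \Phi_J^+$. -/

import Mathlib

open scoped RealInnerProductSpace

/-- In a root system with base `Δ = I ⊔ J` and positive roots `pos`, for a fixed
`λ` in the `ℕ`-span of `Φ_I⁺` there are only finitely many `μ` in the `ℕ`-span of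
`Φ_J⁺` such that `λ + μ` is a nonnegative integral combination of elements of
`Φ⁺ \ Φ_J⁺`. -/
theorem stmt16 {V : Type*} [NormedAddCommGroup V] [InnerProductSpace ℝ V]
    (Φ Δ J : Set V) (hJ : J ⊆ Δ) (hΔΦ : Δ ⊆ Φ)
    (hfin : Φ.Finite) (h0 : (0 : V) ∉ Φ)
    (hspan : Submodule.span ℝ Φ = ⊤)
    (hli : LinearIndependent ℝ ((↑) : Δ → V))
    (hcrys : ∀ α ∈ Φ, ∀ β ∈ Φ, ∃ n : ℤ, 2 * ⟪β, α⟫ / ⟪α, α⟫ = (n : ℝ))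
    (hrefl : ∀ α ∈ Φ, ∀ β ∈ Φ, β - (2 * ⟪β, α⟫ / ⟪α, α⟫) • α ∈ Φ)
    (pos : Set V)
    (hpos : pos = Φ ∩ (AddSubmonoid.closure Δ : Set V))
    (hsign : Φ = pos ∪ (-pos))
    (lam : V)
    (hlam : lam ∈ AddSubmonoid.closure (pos ∩ (Submodule.span ℤ (Δ \ J) : Set V))) :
    {μ : V | μ ∈ AddSubmonoid.closure (pos ∩ (Submodule.span ℤ J : Set V)) ∧
      lam + μ ∈ AddSubmonoid.closure
        (pos \ (pos ∩ (Submodule.span ℤ J : Set V)))}.Finite := by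
  classical
  have hΔfin : Δ.Finite := hfin.subset hΔΦ
  haveI : Fintype Δ := hΔfin.fintype
  have hposΦ : pos ⊆ Φ := by rw [hpos]; exact Set.inter_subset_left
  have hposΔ : pos ⊆ (AddSubmonoid.closure Δ : Set V) := by
    rw [hpos]; exact Set.inter_subset_right
  -- Δ spans V
  have hspantop : ⊤ ≤ Submodule.span ℝ (Set.range ((↑) : Δ → V)) := by
    rw [Subtype.range_coe, ← hspan]
    refine Submodule.span_le.mpr fun x hx => ?_
    have hcl : ∀ y ∈ AddSubmonoid.closure Δ, y ∈ Submodule.span ℝ Δ := fun y hy =>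
      AddSubmonoid.closure_induction (fun z hz => Submodule.subset_span hz)
        (Submodule.zero_mem _) (fun a b _ _ ha hb => Submodule.add_mem _ ha hb) hy
    rw [hsign] at hx
    rcases hx with hx | hx
    · exact hcl x (hposΔ hx)
    · have : -x ∈ pos := Set.mem_neg.mp hx
      simpa using Submodule.neg_mem _ (hcl _ (hposΔ this))
  set B : Module.Basis Δ ℝ V := Module.Basis.mk hli hspantop with hBdef
  have hBap : ∀ (z : V) (hz : z ∈ Δ), B.repr z = Finsupp.single ⟨z, hz⟩ 1 := by
    intro z hz
    have h1 : (B ⟨z, hz⟩ : V) = z := Module.Basis.mk_apply hli hspantop ⟨z, hz⟩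
    have h2 := B.repr_self (⟨z, hz⟩ : Δ)
    rwa [h1] at h2
  -- Lemma A: elements of closure Δ have natural-number coordinates
  have hA : ∀ v ∈ AddSubmonoid.closure Δ, ∀ d : Δ, ∃ n : ℕ, B.repr v d = (n : ℝ) := by
    intro v hv
    refine AddSubmonoid.closure_induction ?_ ?_ ?_ hv
    · intro z hz d
      rw [hBap z hz, Finsupp.single_apply]
      by_cases h : (⟨z, hz⟩ : Δ) = d
      · exact ⟨1, by simp [h]⟩
      · exact ⟨0, by simp [h]⟩
    · intro d; exact ⟨0, by simp⟩
    · intro a b _ _ ha hb d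
      obtain ⟨m, hm⟩ := ha d; obtain ⟨n, hn⟩ := hb d
      exact ⟨m + n, by rw [map_add, Finsupp.add_apply, hm, hn]; push_cast; ring⟩
  -- elements of span ℤ J have zero coordinates outside J
  have hBJ : ∀ v ∈ Submodule.span ℤ J, ∀ d : Δ, (d : V) ∉ J → B.repr v d = 0 := by
    intro v hv
    refine Submodule.span_induction ?_ ?_ ?_ ?_ hv
    · intro z hz d hd
      rw [hBap z (hJ hz), Finsupp.single_apply, if_neg]
      intro h
      have hzd : z = (d : V) := by rw [← h]
      exact hd (hzd ▸ hz)
    · intro d _; simp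
    · intro a b _ _ ha hb d hd
      rw [map_add, Finsupp.add_apply, ha d hd, hb d hd, add_zero]
    · intro a x _ hx d hd
      rw [map_zsmul, Finsupp.smul_apply, hx d hd, smul_zero]
  -- elements of span ℤ (Δ \ J) have zero coordinates inside J
  have hBI : ∀ v ∈ Submodule.span ℤ (Δ \ J), ∀ d : Δ, (d : V) ∈ J → B.repr v d = 0 := by
    intro v hv
    refine Submodule.span_induction ?_ ?_ ?_ ?_ hv
    · intro z hz d hd
      rw [hBap z hz.1, Finsupp.single_apply, if_neg]
      intro h
      have hzd : z = (d : V) := by rw [← h]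
      exact hz.2 (hzd ▸ hd)
    · intro d _; simp
    · intro a b _ _ ha hb d hd
      rw [map_add, Finsupp.add_apply, ha d hd, hb d hd, add_zero]
    · intro a x _ hx d hd
      rw [map_zsmul, Finsupp.smul_apply, hx d hd, smul_zero]
  -- lam has zero J-coordinates
  have hlamJ : ∀ d : Δ, (d : V) ∈ J → B.repr lam d = 0 := by
    refine AddSubmonoid.closure_induction ?_ ?_ ?_ hlam
    · intro z hz d hd; exact hBI z hz.2 d hd
    · intro d _; simp
    · intro a b _ _ ha hb d hd
      rw [map_add, Finsupp.add_apply, ha d hd, hb d hd, add_zero]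
  -- every positive root not in span ℤ J has a coordinate ≥ 1 outside J
  have hC : ∀ γ ∈ pos \ (pos ∩ (Submodule.span ℤ J : Set V)),
      ∃ d : Δ, (d : V) ∉ J ∧ 1 ≤ B.repr γ d := by
    intro γ hγ
    have hγcl : γ ∈ AddSubmonoid.closure Δ := hposΔ hγ.1
    have hγJ : γ ∉ (Submodule.span ℤ J : Set V) := fun h => hγ.2 ⟨hγ.1, h⟩
    by_contra hcon
    push_neg at hcon
    apply hγJ
    have hrep : γ = ∑ d : Δ, B.repr γ d • (d : V) := by
      conv_lhs => rw [← B.sum_repr γ]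
      refine Finset.sum_congr rfl fun d _ => ?_
      rw [hBdef, Module.Basis.mk_apply]
    rw [hrep]
    refine Submodule.sum_mem _ fun d _ => ?_
    by_cases hd : (d : V) ∈ J
    · obtain ⟨n, hn⟩ := hA γ hγcl d
      rw [hn, Nat.cast_smul_eq_nsmul]
      exact (Submodule.span ℤ J).toAddSubmonoid.nsmul_mem (Submodule.subset_span hd) n
    · obtain ⟨n, hn⟩ := hA γ hγcl d
      have hlt : (n : ℝ) < 1 := by rw [← hn]; exact hcon d hd
      have hn0 : n = 0 := Nat.lt_one_iff.mp (by exact_mod_cast hlt)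
      rw [hn, hn0]; simp
  -- a uniform bound on coordinates of positive roots
  obtain ⟨C, hC0, hCb⟩ : ∃ C : ℝ, 0 ≤ C ∧ ∀ γ ∈ pos, ∀ d : Δ, B.repr γ d ≤ C := by
    have hposfin : pos.Finite := hfin.subset hposΦ
    have hTfin : (insert (0 : ℝ)
        ((fun p : V × Δ => B.repr p.1 p.2) '' (pos ×ˢ Set.univ))).Finite :=
      ((hposfin.prod Set.finite_univ).image _).insert 0
    obtain ⟨C, hCub⟩ := hTfin.bddAbove
    exact ⟨C, hCub (Set.mem_insert _ _),
      fun γ hγ d => hCub (Set.mem_insert_of_mem _ ⟨(γ, d), ⟨hγ, trivial⟩, rfl⟩)⟩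
  -- the "I-weight" functional
  set f : V → ℝ := fun v => ∑ d : Δ, if (d : V) ∈ J then 0 else B.repr v d with hfdef
  have hfadd : ∀ a b : V, f (a + b) = f a + f b := by
    intro a b
    simp only [hfdef, map_add, Finsupp.add_apply]
    rw [← Finset.sum_add_distrib]
    refine Finset.sum_congr rfl fun d _ => ?_
    by_cases h : (d : V) ∈ J <;> simp [h]
  have hf0 : f 0 = 0 := by simp [hfdef]
  -- f is ≥ 1 on generators
  have hf1 : ∀ γ ∈ pos \ (pos ∩ (Submodule.span ℤ J : Set V)), 1 ≤ f γ := by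
    intro γ hγ
    obtain ⟨d0, hd0J, hd01⟩ := hC γ hγ
    have hterm : ∀ d : Δ, d ∈ Finset.univ →
        0 ≤ (if (d : V) ∈ J then 0 else B.repr γ d) := by
      intro d _
      by_cases h : (d : V) ∈ J
      · simp [h]
      · obtain ⟨n, hn⟩ := hA γ (hposΔ hγ.1) d
        simp [h, hn]
    calc (1 : ℝ) ≤ if (d0 : V) ∈ J then 0 else B.repr γ d0 := by rw [if_neg hd0J]; exact hd01
    _ ≤ f γ := Finset.single_le_sum hterm (Finset.mem_univ d0)
  -- the key estimate
  have hkey : ∀ (j : Δ), ∀ v ∈ AddSubmonoid.closure (pos \ (pos ∩ (Submodule.span ℤ J : Set V))),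
      B.repr v j ≤ C * f v := by
    intro j v hv
    refine AddSubmonoid.closure_induction ?_ ?_ ?_ hv
    · intro γ hγ
      calc B.repr γ j ≤ C := hCb γ hγ.1 j
      _ ≤ C * f γ := le_mul_of_one_le_right hC0 (hf1 γ hγ)
    · simp [hf0]
    · intro a b _ _ ha hb
      rw [map_add, Finsupp.add_apply, hfadd, mul_add]
      exact add_le_add ha hb
  -- bound on coordinates of μ
  set N : ℝ := f lam with hNdef
  set M : ℕ := ⌈C * N⌉₊ with hMdef
  have hbound : ∀ μ ∈ {μ : V | μ ∈ AddSubmonoid.closure (pos ∩ (Submodule.span ℤ J : Set V)) ∧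
      lam + μ ∈ AddSubmonoid.closure (pos \ (pos ∩ (Submodule.span ℤ J : Set V)))},
      ∀ d : Δ, ∃ n : ℕ, n ≤ M ∧ B.repr μ d = (n : ℝ) := by
    rintro μ ⟨hμ1, hμ2⟩ d
    have hμcl : μ ∈ AddSubmonoid.closure Δ :=
      AddSubmonoid.closure_le.mpr (fun x hx => hposΔ hx.1) hμ1
    have hμJ : μ ∈ Submodule.span ℤ J := by
      refine AddSubmonoid.closure_induction (fun x hx => hx.2) (Submodule.zero_mem _)
        (fun a b _ _ ha hb => Submodule.add_mem _ ha hb) hμ1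
    obtain ⟨n, hn⟩ := hA μ hμcl d
    refine ⟨n, ?_, hn⟩
    by_cases hd : (d : V) ∈ J
    · -- use the key estimate
      have hfμ : f μ = 0 := by
        simp only [hfdef]
        refine Finset.sum_eq_zero fun e _ => ?_
        by_cases h : (e : V) ∈ J
        · simp [h]
        · simp [h, hBJ μ hμJ e h]
      have h1 : B.repr (lam + μ) d ≤ C * f (lam + μ) := hkey d _ hμ2
      rw [hfadd, hfμ, add_zero, map_add, Finsupp.add_apply, hlamJ d hd, zero_add] at h1
      rw [hn] at h1
      have h2 : (n : ℝ) ≤ (M : ℝ) := le_trans h1 (Nat.le_ceil _)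
      exact_mod_cast h2
    · have : B.repr μ d = 0 := hBJ μ hμJ d hd
      rw [this] at hn
      have : n = 0 := by exact_mod_cast hn.symm
      omega
  -- conclude finiteness
  have hT : (Nat.cast '' {n : ℕ | n ≤ M} : Set ℝ).Finite := (Set.finite_Iic M).image _
  have hpi : (Set.univ.pi fun _ : Δ => (Nat.cast '' {n : ℕ | n ≤ M} : Set ℝ)).Finite :=
    Set.Finite.pi fun _ => hT
  have hinj : Function.Injective (fun v : V => (fun d : Δ => B.repr v d)) := by
    intro a b h
    exact B.repr.injective (DFunLike.coe_injective h)
  refine Set.Finite.subset (Set.Finite.preimage (Function.Injective.injOn hinj) hpi) ?_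
  intro μ hμ
  intro d _
  obtain ⟨n, hnM, hn⟩ := hbound μ hμ d
  exact ⟨n, hnM, hn.symm⟩
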